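/- Let X be a measurable space, λ a σ-finite measure on X, and h, q : X → [0,∞) measurable functions such that γ := λ.withDensity h is a finite measure with γ(X) > 0 and h(x) = 0 for λ-almost every x with q(x) = 0. Let {A_i}_{i∈I} be a finite measurable partition of X and suppose ω_i^q := ∫_{A_i} q dλ ∈ (0, ∞) for every i ∈ I. Define the truncated normalized proposal densities d_i(x) := q(x)·1_{A_i}(x) / ω_i^q, so that Q_i := λ.withDensity d_i is a probability measure. Then for every bounded measurable f : X → ℝ, the self-normalized stratified importance sampling identity holds: ( Σ_{i∈I} ∫_X ( h(x) f(x) / d_i(x) ) dQ_i(x) ) / ( Σ_{i∈I} ∫_X ( h(x) / d_i(x) ) dQ_i(x) ) = ( ∫_X f h dλ ) / ( ∫_X h dλ ), i.e., it equals the expectation of f under the normalized target π := γ / γ(X). -/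

import Mathlib

open MeasureTheory Filter Topology
open scoped NNReal ENNReal

theorem stratified_self_normalized_importance_sampling_identity
    {X : Type*} [MeasurableSpace X]
    (lam : Measure X) [SigmaFinite lam]
    (h q : X → ℝ≥0) (hh : Measurable h) (hq : Measurable q)
    (γ : Measure X) (hγdef : γ = lam.withDensity fun x => (h x : ℝ≥0∞))
    [IsFiniteMeasure γ] (hγpos : 0 < γ Set.univ)
    (hzero : ∀ᵐ x ∂lam, q x = 0 → h x = 0)
    {ι : Type*} [Fintype ι]
    (A : ι → Set X) (hA : ∀ i, MeasurableSet (A i))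
    (hdisj : Pairwise fun i j => Disjoint (A i) (A j))
    (hcover : (⋃ i, A i) = Set.univ)
    (ω : ι → ℝ≥0) (hωpos : ∀ i, 0 < ω i)
    (hωdef : ∀ i, ∫⁻ x in A i, (q x : ℝ≥0∞) ∂lam = (ω i : ℝ≥0∞))
    (d : ι → X → ℝ≥0) (hd : ∀ i x, d i x = Set.indicator (A i) q x / ω i)
    (Q : ι → Measure X) (hQ : ∀ i, Q i = lam.withDensity fun x => (d i x : ℝ≥0∞))
    (hQprob : ∀ i, IsProbabilityMeasure (Q i))
    (f : X → ℝ) (hf : Measurable f) (hfb : ∃ C : ℝ, ∀ x, |f x| ≤ C) :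
    (∑ i, ∫ x, (h x : ℝ) * f x / (d i x : ℝ) ∂(Q i)) /
      (∑ i, ∫ x, (h x : ℝ) / (d i x : ℝ) ∂(Q i))
    = (∫ x, f x * (h x : ℝ) ∂lam) / (∫ x, (h x : ℝ) ∂lam) := by
  have dmeas : ∀ i, Measurable (d i) := by
    intro i
    have : Measurable fun x => Set.indicator (A i) q x / ω i :=
      (hq.indicator (hA i)).div measurable_const
    simpa [funext (hd i)] using this
  -- key pointwise lemma
  have key : ∀ (r : X → ℝ), ∀ i,
      ∫ x, (h x : ℝ) * r x / (d i x : ℝ) ∂(Q i)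
        = ∫ x in A i, (h x : ℝ) * r x ∂lam := by
    intro r i
    rw [hQ i, integral_withDensity_eq_integral_smul (dmeas i),
      ← integral_indicator (hA i)]
    refine integral_congr_ae ?_
    filter_upwards [hzero] with x hx
    by_cases hxA : x ∈ A i
    · by_cases hq0 : q x = 0
      · simp [Set.indicator_of_mem hxA, hx hq0]
      · have hdne : d i x ≠ 0 := by
          rw [hd i x, Set.indicator_of_mem hxA]
          exact div_ne_zero hq0 (hωpos i).ne'
        have hdne' : (d i x : ℝ) ≠ 0 := by exact_mod_cast hdne
        rw [Set.indicator_of_mem hxA, NNReal.smul_def, smul_eq_mul, mul_comm,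
          div_mul_cancel₀ _ hdne']
    · have hd0 : d i x = 0 := by
        rw [hd i x, Set.indicator_of_notMem hxA]
        simp
      simp [Set.indicator_of_notMem hxA, hd0]
  -- integrability of h
  have hint : Integrable (fun x => (h x : ℝ)) lam := by
    refine ⟨hh.coe_nnreal_real.aestronglyMeasurable, ?_⟩
    show ∫⁻ x, (‖(h x : ℝ)‖₊ : ℝ≥0∞) ∂lam < ⊤
    have : ∀ x, (‖(h x : ℝ)‖₊ : ℝ≥0∞) = (h x : ℝ≥0∞) := by
      intro x; simp [NNReal.nnnorm_eq]
    simp_rw [this]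
    have : γ Set.univ = ∫⁻ x, (h x : ℝ≥0∞) ∂lam := by
      rw [hγdef, withDensity_apply _ MeasurableSet.univ, Measure.restrict_univ]
    rw [← this]
    exact measure_lt_top γ _
  -- summation lemma
  have hsum : ∀ (g : X → ℝ), Integrable g lam →
      ∑ i, ∫ x in A i, g x ∂lam = ∫ x, g x ∂lam := by
    intro g hg
    have := integral_iUnion (μ := lam) hA hdisj (hg.integrableOn)
    rw [hcover, Measure.restrict_univ, tsum_fintype] at this
    exact this.symm
  -- integrability of h * f
  obtain ⟨C, hC⟩ := hfb
  have hintf : Integrable (fun x => (h x : ℝ) * f x) lam := by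
    have := hint.bdd_mul hf.aestronglyMeasurable (c := C) (Eventually.of_forall fun x => by
      simpa [Real.norm_eq_abs] using hC x)
    simpa [mul_comm] using this
  have hnum : (∑ i, ∫ x, (h x : ℝ) * f x / (d i x : ℝ) ∂(Q i))
      = ∫ x, (h x : ℝ) * f x ∂lam := by
    rw [Finset.sum_congr rfl fun i _ => key f i]
    exact hsum _ hintf
  have hden : (∑ i, ∫ x, (h x : ℝ) / (d i x : ℝ) ∂(Q i))
      = ∫ x, (h x : ℝ) ∂lam := by
    have : ∀ i, ∫ x, (h x : ℝ) / (d i x : ℝ) ∂(Q i)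
        = ∫ x in A i, (h x : ℝ) ∂lam := by
      intro i
      have := key (fun _ => 1) i
      simpa using this
    rw [Finset.sum_congr rfl fun i _ => this i]
    have := hsum (fun x => (h x : ℝ)) hint
    exact this
  rw [hnum, hden]
  congr 1
  exact integral_congr_ae (Eventually.of_forall fun x => mul_comm _ _)
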